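/- Let Ω, β, k_d, k be real constants with Ω ≠ 0 and k² + k_d² ≠ 0, a = kβ/((k² + k_d²)Ω), D(x,y,t) = √((kx + a·sin(Ωt))² + (ky + a − a·cos(Ωt))²), and ψ = J₀(D). Then at every point where D ≠ 0, ψ satisfies the rotating-wind Rossby wave equation [∂_t + Ω(x·∂_y − y·∂_x)](ψ_xx + ψ_yy − k_d²ψ) + β·ψ_x = 0. -/

import Mathlib

/-- Bessel function of the first kind of integer order `n`,
via the Bessel integral representation. -/
noncomputable def besselJ (n : ℤ) (z : ℝ) : ℝ :=
  (1 / Real.pi) * ∫ θ in (0:ℝ)..Real.pi, Real.cos (n * θ - z * Real.sin θ)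

noncomputable def rotD (β kd k Ω : ℝ) (x y t : ℝ) : ℝ :=
  Real.sqrt ((k * x + (k * β / ((k ^ 2 + kd ^ 2) * Ω)) * Real.sin (Ω * t)) ^ 2 +
             (k * y + (k * β / ((k ^ 2 + kd ^ 2) * Ω)) -
               (k * β / ((k ^ 2 + kd ^ 2) * Ω)) * Real.cos (Ω * t)) ^ 2)

noncomputable def rotPsi (β kd k Ω : ℝ) (x y t : ℝ) : ℝ :=
  besselJ 0 (rotD β kd k Ω x y t)

/-- `G = ψ_xx + ψ_yy − k_d²ψ` for `ψ = J₀(D)`. -/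
noncomputable def rotG (β kd k Ω : ℝ) (x y t : ℝ) : ℝ :=
  deriv (fun x' => deriv (fun x'' => rotPsi β kd k Ω x'' y t) x') x +
  deriv (fun y' => deriv (fun y'' => rotPsi β kd k Ω x y'' t) y') y -
  kd ^ 2 * rotPsi β kd k Ω x y t


open Real MeasureTheory intervalIntegral Filter Metric

noncomputable def j0 (z : ℝ) : ℝ := (1/Real.pi) * ∫ θ in (0:ℝ)..Real.pi, Real.cos (z * Real.sin θ)
noncomputable def j0d (z : ℝ) : ℝ :=
  (1/Real.pi) * ∫ θ in (0:ℝ)..Real.pi, -Real.sin (z * Real.sin θ) * Real.sin θ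
noncomputable def j0dd (z : ℝ) : ℝ :=
  (1/Real.pi) * ∫ θ in (0:ℝ)..Real.pi, -(Real.cos (z * Real.sin θ) * Real.sin θ) * Real.sin θ

lemma hasDerivAt_j0 (z : ℝ) : HasDerivAt j0 (j0d z) z := by
  have H := intervalIntegral.hasDerivAt_integral_of_dominated_loc_of_deriv_le
    (F := fun x θ => Real.cos (x * Real.sin θ))
    (F' := fun x θ => -Real.sin (x * Real.sin θ) * Real.sin θ)
    (x₀ := z) (bound := fun _ => 1) (a := 0) (b := Real.pi) (μ := volume) (s := Metric.ball z 1)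
    (Metric.ball_mem_nhds z one_pos)
    (Filter.Eventually.of_forall fun x =>
      ((by fun_prop : Continuous fun θ => Real.cos (x * Real.sin θ))).aestronglyMeasurable)
    ((by fun_prop : Continuous fun θ => Real.cos (z * Real.sin θ)).intervalIntegrable _ _)
    ((by fun_prop : Continuous fun θ => -Real.sin (z * Real.sin θ) * Real.sin θ)).aestronglyMeasurable
    (Filter.Eventually.of_forall fun θ _ x _ => by
      have h1 : |Real.sin (x * Real.sin θ)| ≤ 1 := Real.abs_sin_le_one _
      have h2 : |Real.sin θ| ≤ 1 := Real.abs_sin_le_one _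
      calc ‖-Real.sin (x * Real.sin θ) * Real.sin θ‖
          = |Real.sin (x * Real.sin θ)| * |Real.sin θ| := by
            rw [norm_mul, norm_neg]; rfl
        _ ≤ 1 := mul_le_one₀ h1 (abs_nonneg _) h2)
    (intervalIntegrable_const)
    (Filter.Eventually.of_forall fun θ _ x _ => by
      simpa [mul_comm] using ((hasDerivAt_mul_const (Real.sin θ)).cos (x := x)))
  exact H.2.const_mul (1/Real.pi)

lemma hasDerivAt_j0d (z : ℝ) : HasDerivAt j0d (j0dd z) z := by
  have H := intervalIntegral.hasDerivAt_integral_of_dominated_loc_of_deriv_le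
    (F := fun x θ => -Real.sin (x * Real.sin θ) * Real.sin θ)
    (F' := fun x θ => -(Real.cos (x * Real.sin θ) * Real.sin θ) * Real.sin θ)
    (x₀ := z) (bound := fun _ => 1) (a := 0) (b := Real.pi) (μ := volume) (s := Metric.ball z 1)
    (Metric.ball_mem_nhds z one_pos)
    (Filter.Eventually.of_forall fun x =>
      ((by fun_prop : Continuous fun θ => -Real.sin (x * Real.sin θ) * Real.sin θ)).aestronglyMeasurable)
    ((by fun_prop : Continuous fun θ => -Real.sin (z * Real.sin θ) * Real.sin θ).intervalIntegrable _ _)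
    ((by fun_prop : Continuous fun θ => -(Real.cos (z * Real.sin θ) * Real.sin θ) * Real.sin θ)).aestronglyMeasurable
    (Filter.Eventually.of_forall fun θ _ x _ => by
      have h1 : |Real.cos (x * Real.sin θ)| ≤ 1 := Real.abs_cos_le_one _
      have h2 : |Real.sin θ| ≤ 1 := Real.abs_sin_le_one _
      calc ‖-(Real.cos (x * Real.sin θ) * Real.sin θ) * Real.sin θ‖
          = |Real.cos (x * Real.sin θ)| * |Real.sin θ| * |Real.sin θ| := by
            rw [norm_mul, norm_neg, norm_mul]; rfl
        _ ≤ 1 := mul_le_one₀ (mul_le_one₀ h1 (abs_nonneg _) h2) (abs_nonneg _) h2)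
    (intervalIntegrable_const)
    (Filter.Eventually.of_forall fun θ _ x _ => by
      have h1 : HasDerivAt (fun x' => Real.sin (x' * Real.sin θ))
          (Real.cos (x * Real.sin θ) * Real.sin θ) x := by
        simpa [mul_comm] using ((hasDerivAt_mul_const (Real.sin θ)).sin (x := x))
      exact (h1.neg).mul_const (Real.sin θ))
  exact H.2.const_mul (1/Real.pi)

lemma j0_ode (z : ℝ) :
    z * j0dd z + j0d z + z * j0 z = 0 := by
  have key : (∫ θ in (0:ℝ)..Real.pi,
      (z * (-(Real.cos (z * Real.sin θ) * Real.sin θ) * Real.sin θ)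
        + -Real.sin (z * Real.sin θ) * Real.sin θ
        + z * Real.cos (z * Real.sin θ))) = 0 := by
    have hderiv : ∀ θ ∈ Set.uIcc (0:ℝ) Real.pi,
        HasDerivAt (fun θ => Real.cos θ * Real.sin (z * Real.sin θ))
          (z * (-(Real.cos (z * Real.sin θ) * Real.sin θ) * Real.sin θ)
            + -Real.sin (z * Real.sin θ) * Real.sin θ
            + z * Real.cos (z * Real.sin θ)) θ := by
      intro θ _
      have h1 : HasDerivAt (fun θ => Real.sin (z * Real.sin θ))
          (Real.cos (z * Real.sin θ) * (z * Real.cos θ)) θ :=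
        ((Real.hasDerivAt_sin θ).const_mul z).sin
      have h2 : HasDerivAt (fun θ => Real.cos θ * Real.sin (z * Real.sin θ)) _ θ :=
        (Real.hasDerivAt_cos θ).mul h1
      convert h2 using 1
      have hsc := Real.sin_sq_add_cos_sq θ
      linear_combination (-(z * Real.cos (z * Real.sin θ))) * hsc
    rw [intervalIntegral.integral_eq_sub_of_hasDerivAt hderiv
      ((by fun_prop : Continuous fun θ =>
        (z * (-(Real.cos (z * Real.sin θ) * Real.sin θ) * Real.sin θ)
          + -Real.sin (z * Real.sin θ) * Real.sin θ
          + z * Real.cos (z * Real.sin θ))).intervalIntegrable _ _)]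
    simp
  have i1 : IntervalIntegrable (fun θ => z * (-(Real.cos (z * Real.sin θ) * Real.sin θ) * Real.sin θ)) volume 0 Real.pi :=
    (by fun_prop : Continuous _).intervalIntegrable _ _
  have i2 : IntervalIntegrable (fun θ => -Real.sin (z * Real.sin θ) * Real.sin θ) volume 0 Real.pi :=
    (by fun_prop : Continuous _).intervalIntegrable _ _
  have i3 : IntervalIntegrable (fun θ => z * Real.cos (z * Real.sin θ)) volume 0 Real.pi :=
    (by fun_prop : Continuous _).intervalIntegrable _ _
  have expand : z * j0dd z + j0d z + z * j0 z
      = (1/Real.pi) * ((∫ θ in (0:ℝ)..Real.pi, z * (-(Real.cos (z * Real.sin θ) * Real.sin θ) * Real.sin θ))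
        + (∫ θ in (0:ℝ)..Real.pi, -Real.sin (z * Real.sin θ) * Real.sin θ)
        + (∫ θ in (0:ℝ)..Real.pi, z * Real.cos (z * Real.sin θ))) := by
    unfold j0 j0dd j0d
    rw [intervalIntegral.integral_const_mul, intervalIntegral.integral_const_mul]
    ring
  rw [expand, ← intervalIntegral.integral_add i1 i2, ← intervalIntegral.integral_add (i1.add i2) i3, key, mul_zero]


lemma hasDerivAt_sqrtQ {p q : ℝ → ℝ} {p' q' s : ℝ}
    (hp : HasDerivAt p p' s) (hq : HasDerivAt q q' s)
    (h : Real.sqrt (p s ^ 2 + q s ^ 2) ≠ 0) :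
    HasDerivAt (fun r => Real.sqrt (p r ^ 2 + q r ^ 2))
      ((p s * p' + q s * q') / Real.sqrt (p s ^ 2 + q s ^ 2)) s := by
  have hQ : p s ^ 2 + q s ^ 2 ≠ 0 := fun h0 => h (by rw [h0, Real.sqrt_zero])
  have hQd : HasDerivAt (fun r => p r ^ 2 + q r ^ 2) _ s := (hp.pow 2).add (hq.pow 2)
  have H := (Real.hasDerivAt_sqrt hQ).comp s hQd
  simp only [Function.comp_def] at H
  refine H.congr_deriv ?_
  rw [eq_div_iff h]
  field_simp
  ring

lemma hasDerivAt_j0_comp {p q : ℝ → ℝ} {p' q' s : ℝ}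
    (hp : HasDerivAt p p' s) (hq : HasDerivAt q q' s)
    (h : Real.sqrt (p s ^ 2 + q s ^ 2) ≠ 0) :
    HasDerivAt (fun r => j0 (Real.sqrt (p r ^ 2 + q r ^ 2)))
      (j0d (Real.sqrt (p s ^ 2 + q s ^ 2)) *
        ((p s * p' + q s * q') / Real.sqrt (p s ^ 2 + q s ^ 2))) s := by
  have H := (hasDerivAt_j0 _).comp s (hasDerivAt_sqrtQ hp hq h)
  simpa [Function.comp_def] using H

lemma hasDerivAt_j0d_comp {p q : ℝ → ℝ} {p' q' s : ℝ}
    (hp : HasDerivAt p p' s) (hq : HasDerivAt q q' s)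
    (h : Real.sqrt (p s ^ 2 + q s ^ 2) ≠ 0) :
    HasDerivAt (fun r => j0d (Real.sqrt (p r ^ 2 + q r ^ 2)))
      (j0dd (Real.sqrt (p s ^ 2 + q s ^ 2)) *
        ((p s * p' + q s * q') / Real.sqrt (p s ^ 2 + q s ^ 2))) s := by
  have H := (hasDerivAt_j0d _).comp s (hasDerivAt_sqrtQ hp hq h)
  simpa [Function.comp_def] using H

lemma affine_hasDerivAt (b c1 : ℝ) (r : ℝ) : HasDerivAt (fun r' => b * r' + c1) b r := by
  simpa using ((hasDerivAt_id r).const_mul b).add_const c1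

lemma second_deriv_x (b c1 c2 s : ℝ)
    (h : Real.sqrt ((b * s + c1) ^ 2 + c2 ^ 2) ≠ 0) :
    deriv (fun r => deriv (fun r' => j0 (Real.sqrt ((b * r' + c1) ^ 2 + c2 ^ 2))) r) s
      = b ^ 2 * (j0dd (Real.sqrt ((b * s + c1) ^ 2 + c2 ^ 2)) * (b * s + c1) ^ 2
            / Real.sqrt ((b * s + c1) ^ 2 + c2 ^ 2) ^ 2
          + j0d (Real.sqrt ((b * s + c1) ^ 2 + c2 ^ 2)) * c2 ^ 2
            / Real.sqrt ((b * s + c1) ^ 2 + c2 ^ 2) ^ 3) := by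
  have hcont : Continuous (fun r => Real.sqrt ((b * r + c1) ^ 2 + c2 ^ 2)) := by fun_prop
  have hev : ∀ᶠ r in nhds s, Real.sqrt ((b * r + c1) ^ 2 + c2 ^ 2) ≠ 0 :=
    hcont.continuousAt.eventually_ne h
  have inner_eq : (fun r => deriv (fun r' => j0 (Real.sqrt ((b * r' + c1) ^ 2 + c2 ^ 2))) r)
      =ᶠ[nhds s] (fun r => j0d (Real.sqrt ((b * r + c1) ^ 2 + c2 ^ 2)) *
        (((b * r + c1) * b + c2 * 0) / Real.sqrt ((b * r + c1) ^ 2 + c2 ^ 2))) := by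
    filter_upwards [hev] with r hr
    exact (hasDerivAt_j0_comp (affine_hasDerivAt b c1 r) (hasDerivAt_const r c2) hr).deriv
  rw [inner_eq.deriv_eq]
  set D := Real.sqrt ((b * s + c1) ^ 2 + c2 ^ 2) with hDdef
  have h1 : HasDerivAt (fun r => j0d (Real.sqrt ((b * r + c1) ^ 2 + c2 ^ 2)))
      (j0dd D * (((b * s + c1) * b + c2 * 0) / D)) s :=
    hasDerivAt_j0d_comp (affine_hasDerivAt b c1 s) (hasDerivAt_const s c2) h
  have h2 : HasDerivAt (fun r => (b * r + c1) * b + c2 * 0) (b * b) s := by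
    simpa using ((affine_hasDerivAt b c1 s).mul_const b).add_const (c2 * 0)
  have h3 : HasDerivAt (fun r => Real.sqrt ((b * r + c1) ^ 2 + c2 ^ 2))
      (((b * s + c1) * b + c2 * 0) / D) s :=
    hasDerivAt_sqrtQ (affine_hasDerivAt b c1 s) (hasDerivAt_const s c2) h
  have h4 := h2.div h3 h
  have h5 : HasDerivAt (fun r => j0d (Real.sqrt ((b * r + c1) ^ 2 + c2 ^ 2)) *
      (((b * r + c1) * b + c2 * 0) / Real.sqrt ((b * r + c1) ^ 2 + c2 ^ 2))) _ s := h1.mul h4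
  rw [h5.deriv]
  have hD2 : D ^ 2 = (b * s + c1) ^ 2 + c2 ^ 2 := Real.sq_sqrt (by positivity)
  have hc2 : c2 ^ 2 = D ^ 2 - (b * s + c1) ^ 2 := by rw [hD2]; ring
  rw [← hDdef, hc2]
  field_simp
  ring

lemma second_deriv_y (b c1 c2 c3 s : ℝ)
    (h : Real.sqrt (c3 ^ 2 + (b * s + c1 - c2) ^ 2) ≠ 0) :
    deriv (fun r => deriv (fun r' => j0 (Real.sqrt (c3 ^ 2 + (b * r' + c1 - c2) ^ 2))) r) s
      = b ^ 2 * (j0dd (Real.sqrt (c3 ^ 2 + (b * s + c1 - c2) ^ 2)) * (b * s + c1 - c2) ^ 2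
            / Real.sqrt (c3 ^ 2 + (b * s + c1 - c2) ^ 2) ^ 2
          + j0d (Real.sqrt (c3 ^ 2 + (b * s + c1 - c2) ^ 2)) * c3 ^ 2
            / Real.sqrt (c3 ^ 2 + (b * s + c1 - c2) ^ 2) ^ 3) := by
  have haff : ∀ r : ℝ, HasDerivAt (fun r' => b * r' + c1 - c2) b r := fun r =>
    (affine_hasDerivAt b c1 r).sub_const c2
  have hcont : Continuous (fun r => Real.sqrt (c3 ^ 2 + (b * r + c1 - c2) ^ 2)) := by fun_prop
  have hev : ∀ᶠ r in nhds s, Real.sqrt (c3 ^ 2 + (b * r + c1 - c2) ^ 2) ≠ 0 :=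
    hcont.continuousAt.eventually_ne h
  have inner_eq : (fun r => deriv (fun r' => j0 (Real.sqrt (c3 ^ 2 + (b * r' + c1 - c2) ^ 2))) r)
      =ᶠ[nhds s] (fun r => j0d (Real.sqrt (c3 ^ 2 + (b * r + c1 - c2) ^ 2)) *
        ((c3 * 0 + (b * r + c1 - c2) * b) / Real.sqrt (c3 ^ 2 + (b * r + c1 - c2) ^ 2))) := by
    filter_upwards [hev] with r hr
    exact (hasDerivAt_j0_comp (hasDerivAt_const r c3) (haff r) hr).deriv
  rw [inner_eq.deriv_eq]
  set D := Real.sqrt (c3 ^ 2 + (b * s + c1 - c2) ^ 2) with hDdef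
  have h1 : HasDerivAt (fun r => j0d (Real.sqrt (c3 ^ 2 + (b * r + c1 - c2) ^ 2)))
      (j0dd D * ((c3 * 0 + (b * s + c1 - c2) * b) / D)) s :=
    hasDerivAt_j0d_comp (hasDerivAt_const s c3) (haff s) h
  have h2 : HasDerivAt (fun r => c3 * 0 + (b * r + c1 - c2) * b) (b * b) s := by
    simpa using ((haff s).mul_const b).const_add (c3 * 0)
  have h3 : HasDerivAt (fun r => Real.sqrt (c3 ^ 2 + (b * r + c1 - c2) ^ 2))
      ((c3 * 0 + (b * s + c1 - c2) * b) / D) s :=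
    hasDerivAt_sqrtQ (hasDerivAt_const s c3) (haff s) h
  have h4 := h2.div h3 h
  have h5 : HasDerivAt (fun r => j0d (Real.sqrt (c3 ^ 2 + (b * r + c1 - c2) ^ 2)) *
      ((c3 * 0 + (b * r + c1 - c2) * b) / Real.sqrt (c3 ^ 2 + (b * r + c1 - c2) ^ 2))) _ s := h1.mul h4
  rw [h5.deriv]
  have hD2 : D ^ 2 = c3 ^ 2 + (b * s + c1 - c2) ^ 2 := Real.sq_sqrt (by positivity)
  have hc3 : c3 ^ 2 = D ^ 2 - (b * s + c1 - c2) ^ 2 := by rw [hD2]; ring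
  rw [← hDdef, hc3]
  field_simp
  ring

lemma besselJ_zero_eq (z : ℝ) : besselJ 0 z = j0 z := by
  unfold besselJ j0
  congr 1
  apply intervalIntegral.integral_congr
  intro θ _
  norm_num


/-- With `a = kβ/((k²+k_d²)Ω)` and `D` the rotating-wind Bessel argument,
`ψ = J₀(D)` satisfies `[∂_t + Ω(x∂_y − y∂_x)](ψ_xx + ψ_yy − k_d²ψ) + βψ_x = 0`
wherever `D ≠ 0`. -/
theorem stmt7 (β kd k Ω : ℝ) (hΩ : Ω ≠ 0) (hk : k ^ 2 + kd ^ 2 ≠ 0) (x y t : ℝ)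
    (hD : rotD β kd k Ω x y t ≠ 0) :
    deriv (fun t' => rotG β kd k Ω x y t') t
      + Ω * (x * deriv (fun y' => rotG β kd k Ω x y' t) y
             - y * deriv (fun x' => rotG β kd k Ω x' y t) x)
      + β * deriv (fun x' => rotPsi β kd k Ω x' y t) x = 0 := by
  simp only [rotG, rotPsi, rotD, besselJ_zero_eq] at hD ⊢
  set a := k * β / ((k ^ 2 + kd ^ 2) * Ω) with ha
  -- pointwise identity for G
  have hG : ∀ x' y' t',
      Real.sqrt ((k * x' + a * Real.sin (Ω * t')) ^ 2
        + (k * y' + a - a * Real.cos (Ω * t')) ^ 2) ≠ 0 →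
      (deriv (fun x'' => deriv (fun x''' => j0 (Real.sqrt ((k * x''' + a * Real.sin (Ω * t')) ^ 2
          + (k * y' + a - a * Real.cos (Ω * t')) ^ 2))) x'') x'
        + deriv (fun y'' => deriv (fun y''' => j0 (Real.sqrt ((k * x' + a * Real.sin (Ω * t')) ^ 2
          + (k * y''' + a - a * Real.cos (Ω * t')) ^ 2))) y'') y'
        - kd ^ 2 * j0 (Real.sqrt ((k * x' + a * Real.sin (Ω * t')) ^ 2
          + (k * y' + a - a * Real.cos (Ω * t')) ^ 2)))
      = -(k ^ 2 + kd ^ 2) * j0 (Real.sqrt ((k * x' + a * Real.sin (Ω * t')) ^ 2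
          + (k * y' + a - a * Real.cos (Ω * t')) ^ 2)) := by
    intro x' y' t' hD'
    rw [second_deriv_x k (a * Real.sin (Ω * t')) (k * y' + a - a * Real.cos (Ω * t')) x' hD',
        second_deriv_y k a (a * Real.cos (Ω * t')) (k * x' + a * Real.sin (Ω * t')) y' hD']
    set D := Real.sqrt ((k * x' + a * Real.sin (Ω * t')) ^ 2
        + (k * y' + a - a * Real.cos (Ω * t')) ^ 2) with hDdef
    have hode := j0_ode D
    have hD2 : D ^ 2 = (k * x' + a * Real.sin (Ω * t')) ^ 2
        + (k * y' + a - a * Real.cos (Ω * t')) ^ 2 := Real.sq_sqrt (by positivity)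
    have hv2 : (k * y' + a - a * Real.cos (Ω * t')) ^ 2
        = D ^ 2 - (k * x' + a * Real.sin (Ω * t')) ^ 2 := by rw [hD2]; ring
    have hdd : j0dd D = (-(j0d D) - D * j0 D) / D := by
      field_simp
      linear_combination hode
    rw [hv2, hdd]
    field_simp
    ring
  -- rewrite the three outer derivatives
  have hcont_t : Continuous (fun t' => Real.sqrt ((k * x + a * Real.sin (Ω * t')) ^ 2
      + (k * y + a - a * Real.cos (Ω * t')) ^ 2)) := by fun_prop
  have hev_t := hcont_t.continuousAt.eventually_ne hD
  have hGt : (fun t' => deriv (fun x' => deriv (fun x'' => j0 (Real.sqrt ((k * x'' + a * Real.sin (Ω * t')) ^ 2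
          + (k * y + a - a * Real.cos (Ω * t')) ^ 2))) x') x
        + deriv (fun y' => deriv (fun y'' => j0 (Real.sqrt ((k * x + a * Real.sin (Ω * t')) ^ 2
          + (k * y'' + a - a * Real.cos (Ω * t')) ^ 2))) y') y
        - kd ^ 2 * j0 (Real.sqrt ((k * x + a * Real.sin (Ω * t')) ^ 2
          + (k * y + a - a * Real.cos (Ω * t')) ^ 2)))
      =ᶠ[nhds t] (fun t' => -(k ^ 2 + kd ^ 2) * j0 (Real.sqrt ((k * x + a * Real.sin (Ω * t')) ^ 2
          + (k * y + a - a * Real.cos (Ω * t')) ^ 2))) := by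
    filter_upwards [hev_t] with t' h'
    exact hG x y t' h'
  have hcont_y : Continuous (fun y' => Real.sqrt ((k * x + a * Real.sin (Ω * t)) ^ 2
      + (k * y' + a - a * Real.cos (Ω * t)) ^ 2)) := by fun_prop
  have hev_y := hcont_y.continuousAt.eventually_ne hD
  have hGy : (fun y' => deriv (fun x' => deriv (fun x'' => j0 (Real.sqrt ((k * x'' + a * Real.sin (Ω * t)) ^ 2
          + (k * y' + a - a * Real.cos (Ω * t)) ^ 2))) x') x
        + deriv (fun y'' => deriv (fun y''' => j0 (Real.sqrt ((k * x + a * Real.sin (Ω * t)) ^ 2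
          + (k * y''' + a - a * Real.cos (Ω * t)) ^ 2))) y'') y'
        - kd ^ 2 * j0 (Real.sqrt ((k * x + a * Real.sin (Ω * t)) ^ 2
          + (k * y' + a - a * Real.cos (Ω * t)) ^ 2)))
      =ᶠ[nhds y] (fun y' => -(k ^ 2 + kd ^ 2) * j0 (Real.sqrt ((k * x + a * Real.sin (Ω * t)) ^ 2
          + (k * y' + a - a * Real.cos (Ω * t)) ^ 2))) := by
    filter_upwards [hev_y] with y' h'
    exact hG x y' t h'
  have hcont_x : Continuous (fun x' => Real.sqrt ((k * x' + a * Real.sin (Ω * t)) ^ 2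
      + (k * y + a - a * Real.cos (Ω * t)) ^ 2)) := by fun_prop
  have hev_x := hcont_x.continuousAt.eventually_ne hD
  have hGx : (fun x' => deriv (fun x'' => deriv (fun x''' => j0 (Real.sqrt ((k * x''' + a * Real.sin (Ω * t)) ^ 2
          + (k * y + a - a * Real.cos (Ω * t)) ^ 2))) x'') x'
        + deriv (fun y' => deriv (fun y'' => j0 (Real.sqrt ((k * x' + a * Real.sin (Ω * t)) ^ 2
          + (k * y'' + a - a * Real.cos (Ω * t)) ^ 2))) y') y
        - kd ^ 2 * j0 (Real.sqrt ((k * x' + a * Real.sin (Ω * t)) ^ 2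
          + (k * y + a - a * Real.cos (Ω * t)) ^ 2)))
      =ᶠ[nhds x] (fun x' => -(k ^ 2 + kd ^ 2) * j0 (Real.sqrt ((k * x' + a * Real.sin (Ω * t)) ^ 2
          + (k * y + a - a * Real.cos (Ω * t)) ^ 2))) := by
    filter_upwards [hev_x] with x' h'
    exact hG x' y t h'
  rw [hGt.deriv_eq, hGy.deriv_eq, hGx.deriv_eq]
  -- first derivatives of psi along each line
  have hp_t : HasDerivAt (fun t' => k * x + a * Real.sin (Ω * t'))
      (a * (Real.cos (Ω * t) * Ω)) t := by
    have h1 : HasDerivAt (fun t' => Ω * t') Ω t := by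
      simpa using (hasDerivAt_id t).const_mul Ω
    exact ((h1.sin).const_mul a).const_add (k * x)
  have hq_t : HasDerivAt (fun t' => k * y + a - a * Real.cos (Ω * t'))
      (-(a * (-Real.sin (Ω * t) * Ω))) t := by
    have h1 : HasDerivAt (fun t' => Ω * t') Ω t := by
      simpa using (hasDerivAt_id t).const_mul Ω
    exact ((h1.cos).const_mul a).const_sub (k * y + a)
  have hpsit := hasDerivAt_j0_comp hp_t hq_t hD
  have hpsit' := hpsit.const_mul (-(k ^ 2 + kd ^ 2))
  have hp_y : HasDerivAt (fun y' : ℝ => k * x + a * Real.sin (Ω * t))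
      0 y := hasDerivAt_const y _
  have hq_y : HasDerivAt (fun y' => k * y' + a - a * Real.cos (Ω * t)) k y :=
    (affine_hasDerivAt k a y).sub_const _
  have hpsiy := hasDerivAt_j0_comp hp_y hq_y hD
  have hpsiy' := hpsiy.const_mul (-(k ^ 2 + kd ^ 2))
  have hp_x : HasDerivAt (fun x' => k * x' + a * Real.sin (Ω * t)) k x :=
    affine_hasDerivAt k _ x
  have hq_x : HasDerivAt (fun x' : ℝ => k * y + a - a * Real.cos (Ω * t)) 0 x :=
    hasDerivAt_const x _
  have hpsix := hasDerivAt_j0_comp hp_x hq_x hD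
  have hpsix' := hpsix.const_mul (-(k ^ 2 + kd ^ 2))
  rw [hpsit'.deriv, hpsiy'.deriv, hpsix'.deriv, hpsix.deriv]
  -- final algebra
  have key : a * ((k ^ 2 + kd ^ 2) * Ω) = k * β := by
    rw [ha]; field_simp
  set D := Real.sqrt ((k * x + a * Real.sin (Ω * t)) ^ 2
      + (k * y + a - a * Real.cos (Ω * t)) ^ 2) with hDdef
  field_simp
  linear_combination (-(j0d D * (k * x + a * Real.sin (Ω * t)))) * key
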